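/- Let (Ω, μ) be a probability space with events A (history of SARS-CoV-2 infection), Y (PASC status), and X (presence of a symptom). Assume: (i) 0 < μ(A) < 1; (ii) μ(Y | Aᶜ) = 0; (iii) setting π = μ(Y | A), 0 < π < 1; (iv) conditionally on Y and conditionally on Yᶜ, the events X and A are independent (i.e., μ(X ∩ A | Y) = μ(X | Y)·μ(A | Y) and μ(X ∩ A | Yᶜ) = μ(X | Yᶜ)·μ(A | Yᶜ)); (v) setting β0 = μ(X | Yᶜ), 0 < β0 < 1, and 0 < μ(X) < 1. Let β1 = μ(X | Y)/μ(X | Yᶜ), θ1 = μ(A | X), θ0 = μ(A | Xᶜ), and assume 0 < θ0 < 1 and 0 < θ1 < 1. Then the odds ratio OR = [θ1/(1−θ1)] / [θ0/(1−θ0)] satisfies OR = 1 − π(1 − β1)/(β0·π·(1 − β1) + (1 − β0)). -/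

import Mathlib

open MeasureTheory

/-- Auxiliary algebraic identity used in the proof of Theorem 1. -/
lemma odds_ratio_alg (π a β0 β1 m x D : ℝ)
    (hm : m = β0 * (β1 * (π * a) + (a - π * a)))
    (hx : x = β0 * (β1 * (π * a) + (1 - π * a)))
    (hD : D = β0 * π * (1 - β1) + (1 - β0))
    (ha0 : 0 < a) (ha1 : a < 1) (hβ00 : 0 < β0) (hDpos : 0 < D) :
    (m / (x - m)) / ((a - m) / (1 - x - (a - m))) =
      1 - π * (1 - β1) / D := by
  have hxm : x - m = β0 * (1 - a) := by rw [hx, hm]; ring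
  have ham : a - m = a * D := by rw [hm, hD]; ring
  have hrest : 1 - x - (a - m) = (1 - β0) * (1 - a) := by rw [hx, hm]; ring
  have h1a : (0:ℝ) < 1 - a := by linarith
  have hflat : ∀ p q r s : ℝ, (p / q) / (r / s) = p * s / (q * r) := by
    intro p q r s
    rw [div_div_eq_mul_div, div_mul_eq_mul_div, div_div]
  rw [hrest, hxm, ham, hflat, hm, hD]
  have h1 : β0 * (1 - a) ≠ 0 := by positivity
  have h2 : a * (β0 * π * (1 - β1) + (1 - β0)) ≠ 0 := by
    apply ne_of_gt; rw [← hD]; positivity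
  have h3 : β0 * π * (1 - β1) + (1 - β0) ≠ 0 := by rw [← hD]; exact ne_of_gt hDpos
  field_simp
  ring

/-- Conditional probability `μ(E | F) = μ(E ∩ F) / μ(F)`, as a real number. -/
noncomputable def cpr {Ω : Type*} [MeasurableSpace Ω] (μ : Measure Ω) (E F : Set Ω) : ℝ :=
  (μ (E ∩ F)).toReal / (μ F).toReal

/-- **Theorem 1.** Under Property 1 (no PASC without infection) and Property 2
(symptom depends on infection only through PASC), the observable odds ratio
`OR_{A,X}` equals `1 − π(1 − β1)/(β0·π·(1 − β1) + (1 − β0))`. -/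
theorem odds_ratio_formula
    {Ω : Type*} [MeasurableSpace Ω] (μ : Measure Ω) [IsProbabilityMeasure μ]
    (A Y X : Set Ω)
    (hAm : MeasurableSet A) (hYm : MeasurableSet Y) (hXm : MeasurableSet X)
    -- (i) 0 < μ(A) < 1
    (hA0 : 0 < (μ A).toReal) (hA1 : (μ A).toReal < 1)
    -- (ii) μ(Y | Aᶜ) = 0
    (hProp1 : cpr μ Y Aᶜ = 0)
    -- (iii) π = μ(Y | A), 0 < π < 1
    (π : ℝ) (hπdef : π = cpr μ Y A) (hπ0 : 0 < π) (hπ1 : π < 1)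
    -- (iv) X ⫫ A conditionally on Y and on Yᶜ
    (hProp2 : cpr μ (X ∩ A) Y = cpr μ X Y * cpr μ A Y)
    (hProp2c : cpr μ (X ∩ A) Yᶜ = cpr μ X Yᶜ * cpr μ A Yᶜ)
    -- (v) β0 = μ(X | Yᶜ), 0 < β0 < 1, and 0 < μ(X) < 1
    (β0 : ℝ) (hβ0def : β0 = cpr μ X Yᶜ) (hβ00 : 0 < β0) (hβ01 : β0 < 1)
    (hX0 : 0 < (μ X).toReal) (hX1 : (μ X).toReal < 1)
    -- β1, θ1, θ0
    (β1 : ℝ) (hβ1def : β1 = cpr μ X Y / cpr μ X Yᶜ)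
    (θ1 : ℝ) (hθ1def : θ1 = cpr μ A X) (hθ10 : 0 < θ1) (hθ11 : θ1 < 1)
    (θ0 : ℝ) (hθ0def : θ0 = cpr μ A Xᶜ) (hθ00 : 0 < θ0) (hθ01 : θ0 < 1) :
    (θ1 / (1 - θ1)) / (θ0 / (1 - θ0)) =
      1 - π * (1 - β1) / (β0 * π * (1 - β1) + (1 - β0)) := by
  -- notation
  set a : ℝ := (μ A).toReal with ha_def
  set y : ℝ := (μ Y).toReal with hy_def
  set x : ℝ := (μ X).toReal with hx_def
  set m : ℝ := (μ (X ∩ A)).toReal with hm_def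
  -- splitting lemma
  have split : ∀ E T : Set Ω, MeasurableSet T →
      (μ E).toReal = (μ (E ∩ T)).toReal + (μ (E ∩ Tᶜ)).toReal := by
    intro E T hT
    rw [← Set.diff_eq, ← ENNReal.toReal_add (measure_ne_top μ _) (measure_ne_top μ _),
      measure_inter_add_diff E hT]
  -- complements
  have compl_toReal : ∀ E : Set Ω, MeasurableSet E →
      (μ Eᶜ).toReal = 1 - (μ E).toReal := by
    intro E hE
    have h := prob_add_prob_compl (μ := μ) hE
    have h2 := congrArg ENNReal.toReal h
    rw [ENNReal.toReal_add (measure_ne_top μ _) (measure_ne_top μ _)] at h2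
    simp at h2
    linarith
  have hAc : (μ Aᶜ).toReal = 1 - a := compl_toReal A hAm
  have hYc : (μ Yᶜ).toReal = 1 - y := compl_toReal Y hYm
  have hXc : (μ Xᶜ).toReal = 1 - x := compl_toReal X hXm
  have h1a : (0:ℝ) < 1 - a := by linarith
  -- Property 1 : μ(Y ∩ Aᶜ) = 0
  have hYAc0 : (μ (Y ∩ Aᶜ)).toReal = 0 := by
    have h := hProp1
    rw [cpr, hAc] at h
    rcases div_eq_zero_iff.mp h with h' | h'
    · exact h'
    · linarith
  -- μ(Y ∩ A) = μ(Y)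
  have hYA : (μ (Y ∩ A)).toReal = y := by
    have h := split Y A hAm
    rw [hYAc0] at h
    linarith
  -- y = π * a
  have hyπ : y = π * a := by
    have h := hπdef
    rw [cpr, hYA] at h
    rw [h]
    rw [← ha_def, div_mul_cancel₀ _ (ne_of_gt hA0)]
  have hy0 : 0 < y := by rw [hyπ]; positivity
  have hy1 : y < 1 := by nlinarith [hyπ]
  have h1y : (0:ℝ) < 1 - y := by linarith
  -- cpr μ A Y = 1
  have hAY : cpr μ A Y = 1 := by
    rw [cpr, Set.inter_comm, hYA]
    rw [← hy_def, div_self (ne_of_gt hy0)]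
  -- Property 2 on Y : μ(X ∩ A ∩ Y) = μ(X ∩ Y)
  have hXAY : (μ (X ∩ A ∩ Y)).toReal = (μ (X ∩ Y)).toReal := by
    have h := hProp2
    rw [hAY, mul_one] at h
    simp only [cpr] at h
    rw [div_eq_div_iff (ne_of_gt hy0) (ne_of_gt hy0)] at h
    exact mul_right_cancel₀ (ne_of_gt hy0) h
  -- μ(X ∩ Yᶜ) = β0 * (1 - y)
  have hXYc : (μ (X ∩ Yᶜ)).toReal = β0 * (1 - y) := by
    rw [hβ0def, cpr, hYc]
    field_simp
  -- μ(X ∩ Y) = β1 * β0 * y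
  have hXY : (μ (X ∩ Y)).toReal = β1 * β0 * y := by
    have h := hβ1def
    simp only [cpr] at h
    rw [hXYc, hYc] at h
    have hb : β0 * (1 - y) / (1 - y) = β0 := by field_simp
    rw [hb] at h
    rw [div_div, eq_div_iff (by positivity : y * β0 ≠ 0)] at h
    rw [← h]; ring
  -- μ(A ∩ Yᶜ) = a - y
  have hAYc : (μ (A ∩ Yᶜ)).toReal = a - y := by
    have h := split A Y hYm
    rw [Set.inter_comm A Y, hYA] at h
    linarith
  -- Property 2 on Yᶜ : μ(X ∩ A ∩ Yᶜ) = β0 * (a - y)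
  have hXAYc : (μ (X ∩ A ∩ Yᶜ)).toReal = β0 * (a - y) := by
    have h := hProp2c
    simp only [cpr] at h
    rw [hYc, hAYc, hXYc] at h
    have hb : β0 * (1 - y) / (1 - y) = β0 := by field_simp
    rw [hb, div_eq_iff (ne_of_gt h1y)] at h
    rw [h]
    field_simp
  -- m = β1*β0*y + β0*(a - y)
  have hm : m = β1 * β0 * y + β0 * (a - y) := by
    have h := split (X ∩ A) Y hYm
    rw [hXAY, hXAYc, hXY] at h
    rw [hm_def, h]
  -- x = β1*β0*y + β0*(1 - y)
  have hx : x = β1 * β0 * y + β0 * (1 - y) := by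
    have h := split X Y hYm
    rw [hXY, hXYc] at h
    rw [hx_def, h]
  -- θ1 = m / x
  have hθ1 : θ1 = m / x := by
    rw [hθ1def, cpr, Set.inter_comm]
  -- μ(A ∩ Xᶜ) = a - m
  have hAXc : (μ (A ∩ Xᶜ)).toReal = a - m := by
    have h := split A X hXm
    rw [Set.inter_comm A X] at h
    linarith
  -- θ0 = (a - m) / (1 - x)
  have hθ0 : θ0 = (a - m) / (1 - x) := by
    rw [hθ0def, cpr, hAXc, hXc]
  have h1x : (0:ℝ) < 1 - x := by linarith
  -- positivity facts
  have hmpos : 0 < m := by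
    by_contra h
    push_neg at h
    have : θ1 ≤ 0 := by rw [hθ1]; exact div_nonpos_of_nonpos_of_nonneg h (le_of_lt hX0)
    linarith
  have hmx : m < x := by
    by_contra h
    push_neg at h
    have : 1 ≤ θ1 := by rw [hθ1]; exact (one_le_div hX0).mpr h
    linarith
  have hampos : 0 < a - m := by
    by_contra h
    push_neg at h
    have : θ0 ≤ 0 := by rw [hθ0]; exact div_nonpos_of_nonpos_of_nonneg h (le_of_lt h1x)
    linarith
  have hrestpos : 0 < 1 - x - (a - m) := by
    by_contra h
    push_neg at h
    have : 1 ≤ θ0 := by rw [hθ0]; exact (one_le_div h1x).mpr (by linarith)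
    linarith
  -- rewrite the odds ratio as ratios of joint probabilities
  have hfrac1 : θ1 / (1 - θ1) = m / (x - m) := by
    rw [hθ1]
    rw [show (1:ℝ) - m / x = (x - m) / x by
      rw [eq_div_iff (ne_of_gt hX0), sub_mul, div_mul_cancel₀ _ (ne_of_gt hX0), one_mul]]
    rw [div_div_div_cancel_right₀ (ne_of_gt hX0)]
  have hfrac0 : θ0 / (1 - θ0) = (a - m) / (1 - x - (a - m)) := by
    rw [hθ0]
    rw [show (1:ℝ) - (a - m) / (1 - x) = (1 - x - (a - m)) / (1 - x) by
      rw [eq_div_iff (ne_of_gt h1x), sub_mul, div_mul_cancel₀ _ (ne_of_gt h1x), one_mul]]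
    rw [div_div_div_cancel_right₀ (ne_of_gt h1x)]
  clear_value a y x m
  rw [hfrac1, hfrac0]
  -- positivity of the denominator D
  have hDval : a - m = a * (β0 * π * (1 - β1) + (1 - β0)) := by
    rw [hm, hyπ]; ring
  have hDpos : 0 < β0 * π * (1 - β1) + (1 - β0) := by
    by_contra h
    push_neg at h
    have hle : a * (β0 * π * (1 - β1) + (1 - β0)) ≤ 0 :=
      mul_nonpos_of_nonneg_of_nonpos (le_of_lt hA0) h
    linarith
  exact odds_ratio_alg π a β0 β1 m x (β0 * π * (1 - β1) + (1 - β0))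
    (by rw [hm, hyπ]; ring) (by rw [hx, hyπ]; ring) rfl hA0 hA1 hβ00 hDpos
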